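/- arXiv:2401.01555 — 3 statements merged into one kernel-verified Lean document; each statement's English description precedes it below -/
import Mathlib

section
/- If a real-analytic function f on an open interval U is algebraic (annihilated by a nonzero polynomial P(x,y)), then its derivative f' is also algebraic on a dense open subset of U. -/
def IsAlgebraicOn (f : ℝ → ℝ) (U : Set ℝ) : Prop :=
  ∃ P : MvPolynomial (Fin 2) ℝ, P ≠ 0 ∧ ∀ x ∈ U, MvPolynomial.eval ![x, f x] P = 0

open Polynomial Filter Set

noncomputable section DerivAlgAux

/-- Evaluation of a two-variable polynomial `ℝ[X][Y]` at `(x, y)`. -/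
def E (x y : ℝ) : Polynomial (Polynomial ℝ) →+* ℝ :=
  eval₂RingHom (evalRingHom x) y

lemma E_C (x y : ℝ) (r : ℝ[X]) : E x y (C r) = r.eval x := by simp [E]
lemma E_X (x y : ℝ) : E x y X = y := by simp [E]

/-- The ring hom sending a polynomial to its evaluation function. -/
def psiFun : ℝ[X] →+* (ℝ → ℝ) := eval₂RingHom (Pi.constRingHom ℝ ℝ) _root_.id

lemma psiFun_apply (p : ℝ[X]) (t : ℝ) : psiFun p t = p.eval t := by
  have h := Polynomial.hom_eval₂ p (Pi.constRingHom ℝ ℝ)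
    (Pi.evalRingHom (fun _ : ℝ => ℝ) t) (_root_.id : ℝ → ℝ)
  have h2 : (Pi.evalRingHom (fun _ : ℝ => ℝ) t).comp (Pi.constRingHom ℝ ℝ) = RingHom.id ℝ := by
    ext c; rfl
  rw [h2] at h
  exact h

/-- Two-variable evaluation into the ring of functions. -/
def evFun (g : ℝ → ℝ) : Polynomial (Polynomial ℝ) →+* (ℝ → ℝ) := eval₂RingHom psiFun g

lemma evFun_apply (g : ℝ → ℝ) (r : Polynomial (Polynomial ℝ)) (x : ℝ) :
    evFun g r x = E x (g x) r := by
  have h := Polynomial.hom_eval₂ r psiFun (Pi.evalRingHom (fun _ : ℝ => ℝ) x) g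
  have h2 : (Pi.evalRingHom (fun _ : ℝ => ℝ) x).comp psiFun = evalRingHom x := by
    apply Polynomial.ringHom_ext
    · intro a; simp [psiFun_apply]
    · simp [psiFun_apply]
  simpa [evFun, E, h2] using h

/-- If the product of two functions analytic at `x₀` vanishes near `x₀`, one of them
vanishes near `x₀`. -/
lemma analytic_mul_eventually_zero {x₀ : ℝ} {g h : ℝ → ℝ}
    (hg : AnalyticAt ℝ g x₀) (hh : AnalyticAt ℝ h x₀)
    (hz : (fun x => g x * h x) =ᶠ[nhds x₀] 0) : g =ᶠ[nhds x₀] 0 ∨ h =ᶠ[nhds x₀] 0 := by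
  rcases hg.eventually_eq_zero_or_eventually_ne_zero with h1 | h1
  · exact Or.inl h1
  · right
    have hne : h =ᶠ[nhdsWithin x₀ {x₀}ᶜ] 0 := by
      filter_upwards [h1, hz.filter_mono nhdsWithin_le_nhds] with x hx hx0
      simpa using (mul_eq_zero.mp (by simpa using hx0)).resolve_left hx
    have hx₀ : h x₀ = 0 := by
      have ht : Tendsto h (nhdsWithin x₀ {x₀}ᶜ) (nhds (h x₀)) :=
        hh.continuousAt.continuousWithinAt
      have ht0 : Tendsto h (nhdsWithin x₀ {x₀}ᶜ) (nhds 0) := by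
        rw [tendsto_congr' hne]; exact tendsto_const_nhds
      exact tendsto_nhds_unique ht ht0
    have h3 := eventually_nhdsWithin_iff.mp hne
    filter_upwards [h3] with x hx
    rcases eq_or_ne x x₀ with rfl | hxx
    · simpa using hx₀
    · exact hx hxx

/-- The subring of germs at `x₀` having an analytic representative. -/
def AnG (x₀ : ℝ) : Subring (Germ (nhds x₀) ℝ) where
  carrier := {γ | ∃ g : ℝ → ℝ, AnalyticAt ℝ g x₀ ∧ (↑g : Germ (nhds x₀) ℝ) = γ}
  mul_mem' := by
    rintro _ _ ⟨g, hg, rfl⟩ ⟨h, hh, rfl⟩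
    exact ⟨fun x => g x * h x, hg.mul hh, rfl⟩
  one_mem' := ⟨fun _ => 1, analyticAt_const, rfl⟩
  add_mem' := by
    rintro _ _ ⟨g, hg, rfl⟩ ⟨h, hh, rfl⟩
    exact ⟨fun x => g x + h x, hg.add hh, rfl⟩
  zero_mem' := ⟨fun _ => 0, analyticAt_const, rfl⟩
  neg_mem' := by
    rintro _ ⟨g, hg, rfl⟩
    exact ⟨fun x => -g x, hg.neg, rfl⟩

instance AnG.instNontrivial (x₀ : ℝ) : Nontrivial (AnG x₀) := by
  refine ⟨0, 1, fun h => ?_⟩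
  have h0 : (0 : Germ (nhds x₀) ℝ) = 1 := by simpa using congrArg Subtype.val h
  exact zero_ne_one h0

instance AnG.instNoZeroDivisors (x₀ : ℝ) : NoZeroDivisors (AnG x₀) := by
  constructor
  rintro ⟨γ, g, hg, rfl⟩ ⟨δ, h, hh, rfl⟩ hmul
  have hcoe : ((fun x => g x * h x : ℝ → ℝ) : Germ (nhds x₀) ℝ) = ((0 : ℝ → ℝ) : Germ (nhds x₀) ℝ) := by
    have := congrArg (Subtype.val) hmul
    rw [show (fun x => g x * h x) = g * h from rfl, Filter.Germ.coe_mul]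
    simpa using this
  have hz : (fun x => g x * h x) =ᶠ[nhds x₀] 0 := Filter.Germ.coe_eq.mp hcoe
  rcases analytic_mul_eventually_zero hg hh hz with h1 | h1
  · left; ext; exact (Filter.Germ.coe_eq.mpr h1)
  · right; ext; exact (Filter.Germ.coe_eq.mpr h1)

instance AnG.instIsDomain (x₀ : ℝ) : IsDomain (AnG x₀) :=
  NoZeroDivisors.to_isDomain _


/-- The polynomial-evaluation ring hom into germs. -/
def psiG (x₀ : ℝ) : Polynomial ℝ →+* Germ (nhds x₀) ℝ :=
  (Filter.Germ.coeRingHom (nhds x₀)).comp psiFun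

lemma psiG_apply (x₀ : ℝ) (p : Polynomial ℝ) :
    psiG x₀ p = ((fun t => p.eval t : ℝ → ℝ) : Germ (nhds x₀) ℝ) := by
  have h : psiFun p = fun t => p.eval t := funext (psiFun_apply p)
  show ((psiFun p : ℝ → ℝ) : Germ (nhds x₀) ℝ) = _
  rw [h]

lemma analyticAt_polyEval (x₀ : ℝ) (p : Polynomial ℝ) :
    AnalyticAt ℝ (fun t : ℝ => p.eval t) x₀ := by
  have hid : AnalyticAt ℝ (_root_.id : ℝ → ℝ) x₀ := analyticAt_id
  have h := hid.aeval_polynomial p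
  have h2 : (fun t : ℝ => aeval (_root_.id t) p) = fun t : ℝ => p.eval t := by
    funext t
    exact congrFun (Polynomial.coe_aeval_eq_eval t) p
  rwa [h2] at h

lemma psiG_mem (x₀ : ℝ) (p : Polynomial ℝ) : psiG x₀ p ∈ AnG x₀ :=
  ⟨fun t => p.eval t, analyticAt_polyEval x₀ p, (psiG_apply x₀ p).symm⟩

/-- The polynomial-evaluation ring hom into analytic germs. -/
def psiA (x₀ : ℝ) : Polynomial ℝ →+* AnG x₀ :=
  (psiG x₀).codRestrict _ (psiG_mem x₀)

lemma psiA_injective (x₀ : ℝ) : Function.Injective (psiA x₀) := by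
  rw [injective_iff_map_eq_zero]
  intro p hp
  have h0 : psiG x₀ p = 0 := congrArg Subtype.val hp
  rw [psiG_apply x₀ p] at h0
  have h1 : (fun t => p.eval t) =ᶠ[nhds x₀] (0 : ℝ → ℝ) := Filter.Germ.coe_eq.mp h0
  have h2 : {t : ℝ | p.IsRoot t} ∈ nhds x₀ := by
    filter_upwards [h1] with t ht
    simpa [Polynomial.IsRoot] using ht
  exact p.eq_zero_of_infinite_isRoot (infinite_of_mem_nhds x₀ h2)

lemma germ_coe_eq_zero_iff {x₀ : ℝ} {u : ℝ → ℝ} :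
    ((u : ℝ → ℝ) : Germ (nhds x₀) ℝ) = 0 ↔ u =ᶠ[nhds x₀] (0 : ℝ → ℝ) := by
  constructor
  · intro h; exact Filter.Germ.coe_eq.mp (by simpa using h)
  · intro h; simpa using Filter.Germ.coe_eq.mpr h

lemma coe_eval₂_psiA (x₀ : ℝ) (g : ℝ → ℝ) (z : AnG x₀)
    (hz : (z : Germ (nhds x₀) ℝ) = (g : Germ (nhds x₀) ℝ))
    (r : Polynomial (Polynomial ℝ)) :
    ((Polynomial.eval₂ (psiA x₀) z r : AnG x₀) : Germ (nhds x₀) ℝ)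
      = ((evFun g r : ℝ → ℝ) : Germ (nhds x₀) ℝ) := by
  have h := Polynomial.hom_eval₂ r (psiA x₀) (AnG x₀).subtype z
  have h2 : (AnG x₀).subtype.comp (psiA x₀) = psiG x₀ :=
    Polynomial.ringHom_ext (fun _ => rfl) rfl
  have h3 := Polynomial.hom_eval₂ r psiFun (Filter.Germ.coeRingHom (nhds x₀)) g
  have h4 : (Filter.Germ.coeRingHom (nhds x₀)).comp psiFun = psiG x₀ := rfl
  rw [h2] at h
  rw [h4] at h3
  have h5 : (AnG x₀).subtype z = (g : Germ (nhds x₀) ℝ) := hz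
  rw [h5] at h
  exact h.trans h3.symm

set_option maxHeartbeats 2000000 in
set_option synthInstance.maxHeartbeats 1000000 in
/-- Key algebraic step: if `f` satisfies a nonzero polynomial relation near `x₀`, a
"differentiated" relation holds near `x₀`, and the `y`-partial does not vanish at `x₀`,
then `fd` satisfies a nonzero polynomial relation near `x₀`. -/
lemma key (x₀ : ℝ) (f fd : ℝ → ℝ) (hfa : AnalyticAt ℝ f x₀) (hfd : AnalyticAt ℝ fd x₀)
    (q qX : Polynomial (Polynomial ℝ)) (hq : q ≠ 0)
    (hq0 : ∀ᶠ x in nhds x₀, E x (f x) q = 0)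
    (hrel : ∀ᶠ x in nhds x₀, E x (f x) qX + E x (f x) (derivative q) * fd x = 0)
    (hB : E x₀ (f x₀) (derivative q) ≠ 0) :
    ∃ Qp : Polynomial (Polynomial ℝ), Qp ≠ 0 ∧ ∀ᶠ x in nhds x₀, E x (fd x) Qp = 0 := by
  classical
  set A := AnG x₀ with hA
  let K := FractionRing A
  set fel : A := ⟨(f : Germ (nhds x₀) ℝ), f, hfa, rfl⟩ with hfel
  set fdel : A := ⟨(fd : Germ (nhds x₀) ℝ), fd, hfd, rfl⟩ with hfdel
  let ρ : Polynomial ℝ →+* K := (algebraMap A K).comp (psiA x₀)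
  have hρinj : Function.Injective ρ :=
    (IsFractionRing.injective A K).comp (psiA_injective x₀)
  letI : Algebra (Polynomial ℝ) K := ρ.toAlgebra
  have halgmap : algebraMap (Polynomial ℝ) K = ρ := rfl
  haveI : FaithfulSMul (Polynomial ℝ) K :=
    (faithfulSMul_iff_algebraMap_injective (Polynomial ℝ) K).mpr hρinj
  letI : Algebra (FractionRing (Polynomial ℝ)) K := FractionRing.liftAlgebra (Polynomial ℝ) K
  haveI : IsScalarTower (Polynomial ℝ) (FractionRing (Polynomial ℝ)) K :=
    FractionRing.isScalarTower_liftAlgebra (Polynomial ℝ) K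
  set K₀ := FractionRing (Polynomial ℝ)
  set FK : K := algebraMap A K fel with hFK
  set FdK : K := algebraMap A K fdel with hFdK
  have haev : ∀ (z : A) (r : Polynomial (Polynomial ℝ)),
      Polynomial.aeval (algebraMap A K z) r
        = algebraMap A K (Polynomial.eval₂ (psiA x₀) z r) := by
    intro z r
    rw [Polynomial.aeval_def, halgmap]
    exact (Polynomial.hom_eval₂ r (psiA x₀) (algebraMap A K) z).symm
  have hAq : Polynomial.eval₂ (psiA x₀) fel q = 0 := by
    apply Subtype.ext
    have hc := coe_eval₂_psiA x₀ f fel rfl q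
    rw [hc]
    show _ = (0 : Germ (nhds x₀) ℝ)
    apply germ_coe_eq_zero_iff.mpr
    filter_upwards [hq0] with x hx
    simpa [evFun_apply] using hx
  have hArel : Polynomial.eval₂ (psiA x₀) fel qX
      + Polynomial.eval₂ (psiA x₀) fel (derivative q) * fdel = 0 := by
    apply Subtype.ext
    have hc1 := coe_eval₂_psiA x₀ f fel rfl qX
    have hc2 := coe_eval₂_psiA x₀ f fel rfl (derivative q)
    show ((Polynomial.eval₂ (psiA x₀) fel qX : A) : Germ (nhds x₀) ℝ)
        + ((Polynomial.eval₂ (psiA x₀) fel (derivative q) : A) : Germ (nhds x₀) ℝ)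
          * ((fdel : A) : Germ (nhds x₀) ℝ) = (0 : Germ (nhds x₀) ℝ)
    rw [hc1, hc2]
    have hfd' : ((fdel : A) : Germ (nhds x₀) ℝ) = (fd : Germ (nhds x₀) ℝ) := rfl
    rw [hfd', ← Filter.Germ.coe_mul, ← Filter.Germ.coe_add]
    apply germ_coe_eq_zero_iff.mpr
    filter_upwards [hrel] with x hx
    simpa [evFun_apply] using hx
  have hAB : Polynomial.eval₂ (psiA x₀) fel (derivative q) ≠ 0 := by
    intro h0
    have h3 := congrArg Subtype.val h0
    rw [coe_eval₂_psiA x₀ f fel rfl (derivative q)] at h3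
    have h4 := germ_coe_eq_zero_iff.mp (by simpa using h3)
    have h5 : evFun f (derivative q) x₀ = 0 := by simpa using h4.self_of_nhds
    rw [evFun_apply] at h5
    exact hB h5
  have halgF : IsAlgebraic (Polynomial ℝ) FK := ⟨q, hq, by rw [hFK, haev fel q, hAq, map_zero]⟩
  have hFint : IsIntegral K₀ FK :=
    isAlgebraic_iff_isIntegral.mp
      ((IsFractionRing.isAlgebraic_iff (Polynomial ℝ) K₀ K).mp halgF)
  let L := IntermediateField.adjoin K₀ {FK}
  haveI : FiniteDimensional K₀ L := IntermediateField.adjoin.finiteDimensional hFint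
  have hmem : ∀ r : Polynomial (Polynomial ℝ), Polynomial.aeval FK r ∈ L := by
    intro r
    have h1 : Polynomial.aeval FK (r.map (algebraMap (Polynomial ℝ) K₀))
        = Polynomial.aeval FK r := Polynomial.aeval_map_algebraMap K₀ FK r
    rw [← h1]
    apply IntermediateField.algebra_adjoin_le_adjoin K₀ {FK}
    rw [Algebra.adjoin_singleton_eq_range_aeval]
    exact ⟨_, rfl⟩
  have hKrel : Polynomial.aeval FK qX + Polynomial.aeval FK (derivative q) * FdK = 0 := by
    rw [hFK, haev fel qX, haev fel (derivative q), hFdK, ← map_mul, ← map_add, hArel, map_zero]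
  have hbne : Polynomial.aeval FK (derivative q) ≠ 0 := by
    rw [hFK, haev fel (derivative q)]
    intro h
    exact hAB ((IsFractionRing.injective A K) (by rw [h, map_zero]))
  have hFdmem : FdK ∈ L := by
    have h5 : FdK = -Polynomial.aeval FK qX * (Polynomial.aeval FK (derivative q))⁻¹ := by
      rw [eq_mul_inv_iff_mul_eq₀ hbne]
      linear_combination hKrel
    rw [h5]
    exact L.mul_mem (L.neg_mem (hmem qX)) (L.inv_mem (hmem (derivative q)))
  have hint : IsIntegral K₀ FdK := by
    have h1 : IsIntegral K₀ (⟨FdK, hFdmem⟩ : L) := IsIntegral.of_finite K₀ _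
    have h2 := h1.map L.val
    exact h2
  have halgFd : IsAlgebraic (Polynomial ℝ) FdK :=
    (IsFractionRing.isAlgebraic_iff (Polynomial ℝ) K₀ K).mpr hint.isAlgebraic
  obtain ⟨Qp, hQp, hev⟩ := halgFd
  refine ⟨Qp, hQp, ?_⟩
  have h1 : algebraMap A K (Polynomial.eval₂ (psiA x₀) fdel Qp) = 0 := by
    rw [← haev fdel Qp, ← hFdK]
    exact hev
  have h2 : Polynomial.eval₂ (psiA x₀) fdel Qp = 0 :=
    (IsFractionRing.injective A K) (by rw [h1, map_zero])
  have h3 := congrArg Subtype.val h2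
  rw [coe_eval₂_psiA x₀ fd fdel rfl Qp] at h3
  have h4 := germ_coe_eq_zero_iff.mp (by simpa using h3)
  filter_upwards [h4] with x hx
  simpa [evFun_apply] using hx


lemma E_apply' (x y : ℝ) (r : Polynomial (Polynomial ℝ)) :
    E x y r = (r.map (evalRingHom x)).eval y := by
  show Polynomial.eval₂ (evalRingHom x) y r = _
  exact Polynomial.eval₂_eq_eval_map _

/-- Embedding of bivariate mv-polynomials into `ℝ[X][Y]`. -/
def iota : MvPolynomial (Fin 2) ℝ →+* Polynomial (Polynomial ℝ) :=
  MvPolynomial.eval₂Hom ((C : Polynomial ℝ →+* Polynomial (Polynomial ℝ)).comp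
    (C : ℝ →+* Polynomial ℝ)) ![C X, X]

lemma E_iota (x y : ℝ) (P : MvPolynomial (Fin 2) ℝ) :
    E x y (iota P) = MvPolynomial.eval ![x, y] P := by
  have h := MvPolynomial.eval₂_comp_left (E x y)
    ((C : Polynomial ℝ →+* Polynomial (Polynomial ℝ)).comp (C : ℝ →+* Polynomial ℝ))
    ![C X, X] P
  have h1 : (E x y).comp ((C : Polynomial ℝ →+* Polynomial (Polynomial ℝ)).comp
      (C : ℝ →+* Polynomial ℝ)) = RingHom.id ℝ := by
    ext a
    simp [E_C]
  have h2 : (E x y) ∘ ![C X, X] = ![x, y] := by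
    funext i
    fin_cases i
    · simp [E_C]
    · simp [E_X]
  rw [h1, h2, MvPolynomial.eval₂_id] at h
  exact h

lemma iota_ne_zero {P : MvPolynomial (Fin 2) ℝ} (hP : P ≠ 0) : iota P ≠ 0 := by
  intro h
  apply hP
  apply MvPolynomial.funext
  intro v
  have hv : v = ![v 0, v 1] := by
    funext i
    fin_cases i <;> simp
  have h0 : MvPolynomial.eval ![v 0, v 1] P = 0 := by
    rw [← E_iota (v 0) (v 1) P, h, map_zero]
  rw [hv, h0, map_zero]

/-- Embedding of `ℝ[X][Y]` into bivariate mv-polynomials. -/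
def phi : Polynomial (Polynomial ℝ) →+* MvPolynomial (Fin 2) ℝ :=
  eval₂RingHom (eval₂RingHom (MvPolynomial.C) (MvPolynomial.X 0)) (MvPolynomial.X 1)

lemma eval_phi (x y : ℝ) (r : Polynomial (Polynomial ℝ)) :
    MvPolynomial.eval ![x, y] (phi r) = E x y r := by
  have h := Polynomial.hom_eval₂ r
    (eval₂RingHom (MvPolynomial.C (σ := Fin 2) (R := ℝ)) (MvPolynomial.X 0))
    (MvPolynomial.eval ![x, y]) (MvPolynomial.X 1)
  have h1 : (MvPolynomial.eval ![x, y]).comp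
      (eval₂RingHom (MvPolynomial.C (σ := Fin 2) (R := ℝ)) (MvPolynomial.X 0))
      = evalRingHom x := by
    apply Polynomial.ringHom_ext
    · intro a; simp
    · simp
  have h2 : MvPolynomial.eval ![x, y] (MvPolynomial.X 1 : MvPolynomial (Fin 2) ℝ) = y := by simp
  rw [h1, h2] at h
  exact h

lemma phi_ne_zero {r : Polynomial (Polynomial ℝ)} (hr : r ≠ 0) : phi r ≠ 0 := by
  intro h
  apply hr
  have hev : ∀ x y : ℝ, E x y r = 0 := by
    intro x y; rw [← eval_phi, h, map_zero]
  have hcoef : ∀ i, r.coeff i = 0 := by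
    intro i
    apply Polynomial.funext
    intro t
    have hmap : r.map (evalRingHom t) = 0 := by
      apply Polynomial.funext
      intro y
      have h3 := hev t y
      rw [E_apply'] at h3
      simpa using h3
    have h4 := congrArg (fun p => Polynomial.coeff p i) hmap
    simpa [Polynomial.coeff_map] using h4
  exact Polynomial.ext fun i => by simp [hcoef]

lemma E_sum (x y : ℝ) (q : Polynomial (Polynomial ℝ)) {N : ℕ} (hN : q.natDegree < N) :
    E x y q = ∑ i ∈ Finset.range N, (q.coeff i).eval x * y ^ i := by
  show Polynomial.eval₂ (evalRingHom x) y q = _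
  rw [Polynomial.eval₂_eq_sum_range' (evalRingHom x) hN y]
  simp

lemma E_qX (x y : ℝ) (q : Polynomial (Polynomial ℝ)) (N : ℕ) :
    E x y (∑ i ∈ Finset.range N, C (derivative (q.coeff i)) * X ^ i)
      = ∑ i ∈ Finset.range N, (derivative (q.coeff i)).eval x * y ^ i := by
  rw [map_sum]
  apply Finset.sum_congr rfl
  intro i _
  rw [map_mul, map_pow, E_C, E_X]

lemma E_derivative (x y : ℝ) (q : Polynomial (Polynomial ℝ)) {N : ℕ} (hN : q.natDegree < N) :
    E x y (derivative q) = ∑ i ∈ Finset.range N, (q.coeff i).eval x * (i : ℝ) * y ^ (i - 1) := by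
  have hE : E x y (derivative q) = Polynomial.eval y (derivative (q.map (evalRingHom x))) := by
    rw [E_apply', ← derivative_map]
  set p := q.map (evalRingHom x) with hp
  have hpN : p.natDegree < N := lt_of_le_of_lt natDegree_map_le hN
  have hps : derivative p = ∑ i ∈ Finset.range N, C (p.coeff i * (i : ℝ)) * X ^ (i - 1) := by
    conv_lhs => rw [p.as_sum_range' N hpN]
    rw [map_sum]
    apply Finset.sum_congr rfl
    intro i _
    rw [← Polynomial.C_mul_X_pow_eq_monomial, derivative_C_mul_X_pow]
  rw [hE, hps]
  rw [Polynomial.eval_finset_sum]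
  apply Finset.sum_congr rfl
  intro i _
  simp only [Polynomial.eval_mul, Polynomial.eval_C, Polynomial.eval_pow, Polynomial.eval_X,
    hp, Polynomial.coeff_map, coe_evalRingHom]

end DerivAlgAux



set_option maxHeartbeats 1000000 in
/-- If a real-analytic function on an open interval is algebraic, then its derivative
is algebraic on a dense open subset of the interval. -/
theorem deriv_of_algebraic_is_algebraic (a b : ℝ) (hab : a < b) (f : ℝ → ℝ)
    (hf : AnalyticOn ℝ f (Set.Ioo a b))
    (halg : IsAlgebraicOn f (Set.Ioo a b)) :
    ∃ D : Set ℝ, IsOpen D ∧ D ⊆ Set.Ioo a b ∧ Set.Ioo a b ⊆ closure D ∧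
      ∃ Q : MvPolynomial (Fin 2) ℝ, Q ≠ 0 ∧
        ∀ x ∈ D, MvPolynomial.eval ![x, deriv f x] Q = 0 := by
  classical
  have hUopen : IsOpen (Set.Ioo a b) := isOpen_Ioo
  have hfan : AnalyticOnNhd ℝ f (Set.Ioo a b) :=
    (hUopen.analyticOn_iff_analyticOnNhd).mp hf
  obtain ⟨P, hP0, hPz⟩ := halg
  have hex : ∃ n : ℕ, ∃ r : Polynomial (Polynomial ℝ),
      (r ≠ 0 ∧ ∀ x ∈ Set.Ioo a b, E x (f x) r = 0) ∧ r.natDegree = n := by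
    refine ⟨(iota P).natDegree, iota P, ⟨iota_ne_zero hP0, ?_⟩, rfl⟩
    intro x hx
    rw [E_iota]
    exact hPz x hx
  obtain ⟨q, ⟨hq0, hqz⟩, hqdeg⟩ := Nat.find_spec hex
  have hn1 : q.natDegree ≠ 0 := by
    intro h
    have hr0 : q = C (q.coeff 0) := Polynomial.eq_C_of_natDegree_eq_zero h
    have hr00 : q.coeff 0 ≠ 0 := by
      intro hh
      exact hq0 (by rw [hr0, hh, map_zero])
    apply hr00
    apply Polynomial.eq_zero_of_infinite_isRoot
    apply Set.Infinite.mono ?_ (Set.Ioo_infinite hab)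
    intro x hx
    have h1 := hqz x hx
    rw [hr0] at h1
    rw [E_C] at h1
    exact h1
  set N := q.natDegree + 1 with hN
  have hNlt : q.natDegree < N := Nat.lt_succ_self _
  set qX : Polynomial (Polynomial ℝ)
      := ∑ i ∈ Finset.range N, C (derivative (q.coeff i)) * X ^ i with hqXdef
  have hder : ∀ x ∈ Set.Ioo a b,
      E x (f x) qX + E x (f x) (derivative q) * deriv f x = 0 := by
    intro x hx
    have hfd : HasDerivAt f (deriv f x) x := (hfan x hx).differentiableAt.hasDerivAt
    have hterm : ∀ i ∈ Finset.range N,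
        HasDerivAt (fun t => (q.coeff i).eval t * f t ^ i)
          ((derivative (q.coeff i)).eval x * f x ^ i
            + (q.coeff i).eval x * ((i : ℝ) * f x ^ (i - 1) * deriv f x)) x := by
      intro i _
      exact ((q.coeff i).hasDerivAt x).mul (hfd.pow i)
    have hsum := HasDerivAt.fun_sum hterm
    have hfun : (fun t => ∑ i ∈ Finset.range N, (q.coeff i).eval t * f t ^ i)
        = fun t => E t (f t) q := by
      funext t
      rw [E_sum t (f t) q hNlt]
    rw [hfun] at hsum
    have hev : (fun t => E t (f t) q) =ᶠ[nhds x] (fun _ => (0 : ℝ)) := by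
      filter_upwards [hUopen.mem_nhds hx] with t ht using hqz t ht
    have hzero : HasDerivAt (fun t => E t (f t) q) 0 x :=
      (hasDerivAt_const x (0 : ℝ)).congr_of_eventuallyEq hev
    have huniq := hsum.unique hzero
    rw [Finset.sum_add_distrib] at huniq
    have h2 : ∑ i ∈ Finset.range N, (q.coeff i).eval x * ((i : ℝ) * f x ^ (i - 1) * deriv f x)
        = (∑ i ∈ Finset.range N, (q.coeff i).eval x * (i : ℝ) * f x ^ (i - 1)) * deriv f x := by
      rw [Finset.sum_mul]
      apply Finset.sum_congr rfl
      intro i _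
      ring
    rw [h2] at huniq
    rw [E_qX x (f x) q N, E_derivative x (f x) q hNlt]
    exact huniq
  have hqY0 : derivative q ≠ 0 := by
    intro h
    exact hn1 (Polynomial.natDegree_eq_zero_of_derivative_eq_zero h)
  have hqYdeg : (derivative q).natDegree < q.natDegree := Polynomial.natDegree_derivative_lt hn1
  have hx₀ : ∃ x₀ ∈ Set.Ioo a b, E x₀ (f x₀) (derivative q) ≠ 0 := by
    by_contra h
    push_neg at h
    have hmin := Nat.find_min' hex ⟨derivative q, ⟨hqY0, h⟩, rfl⟩
    omega
  obtain ⟨x₀, hx₀U, hB⟩ := hx₀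
  have hfa : AnalyticAt ℝ f x₀ := hfan x₀ hx₀U
  have hfd' : AnalyticAt ℝ (deriv f) x₀ := hfan.deriv x₀ hx₀U
  obtain ⟨Qp, hQp0, hQev⟩ := key x₀ f (deriv f) hfa hfd' q qX hq0
    (by filter_upwards [hUopen.mem_nhds hx₀U] with t ht using hqz t ht)
    (by filter_upwards [hUopen.mem_nhds hx₀U] with t ht using hder t ht)
    hB
  have hQ0 : phi Qp ≠ 0 := phi_ne_zero hQp0
  have haeval_eq : ∀ v : Fin 2 → ℝ, MvPolynomial.aeval v (phi Qp) = MvPolynomial.eval v (phi Qp) := by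
    intro v
    rw [MvPolynomial.aeval_def, Algebra.algebraMap_self, MvPolynomial.eval₂_id]
  have hanal : AnalyticOnNhd ℝ (fun x => MvPolynomial.eval ![x, deriv f x] (phi Qp))
      (Set.Ioo a b) := by
    intro x hx
    have h1 : ∀ i : Fin 2, AnalyticAt ℝ (fun t => (![t, deriv f t] : Fin 2 → ℝ) i) x := by
      intro i
      fin_cases i
      · simp; exact analyticAt_id
      · simpa using hfan.deriv x hx
    have h2 := AnalyticAt.aeval_mvPolynomial h1 (phi Qp)
    have h3 : (fun t => MvPolynomial.aeval ![t, deriv f t] (phi Qp))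
        = fun t => MvPolynomial.eval ![t, deriv f t] (phi Qp) := by
      funext t
      exact haeval_eq _
    rwa [h3] at h2
  have heq0 : Set.EqOn (fun x => MvPolynomial.eval ![x, deriv f x] (phi Qp)) 0 (Set.Ioo a b) := by
    apply hanal.eqOn_zero_of_preconnected_of_eventuallyEq_zero isPreconnected_Ioo hx₀U
    filter_upwards [hQev] with t ht
    show MvPolynomial.eval ![t, deriv f t] (phi Qp) = 0
    rw [eval_phi]
    exact ht
  exact ⟨Set.Ioo a b, hUopen, subset_rfl, subset_closure, phi Qp, hQ0,
    fun x hx => heq0 hx⟩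
end

section
/- Let H be real-analytic with H_{zz}(z,·) algebraic in its second variable with nonzero minimal-polynomial relation, and suppose ∂_{z̄}H_{zz} ≢ 0 (so H_{zz}(z,·) is nonconstant). Let A(z,p) be real-analytic and define Φ(z,p) = H_{zz}(z, A(z,p)). If Φ(z,·) is algebraic in p, then A(z,·) is algebraic in p. -/
section Helpers

/-- Evaluation of a bivariate polynomial along two analytic functions is analytic. -/
lemma analytic_mveval {f g : ℝ → ℝ} {U : Set ℝ} (hf : AnalyticOnNhd ℝ f U)
    (hg : AnalyticOnNhd ℝ g U) (P : MvPolynomial (Fin 2) ℝ) :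
    AnalyticOnNhd ℝ (fun z => MvPolynomial.eval ![f z, g z] P) U := by
  induction P using MvPolynomial.induction_on with
  | C r => simpa using analyticOnNhd_const
  | add p q hp hq => simp only [map_add]; exact hp.add hq
  | mul_X p n hp =>
    simp only [map_mul, MvPolynomial.eval_X]
    apply hp.mul
    fin_cases n
    · simpa using hf
    · simpa using hg

lemma eqOn_zero_or_eqOn_zero_of_mul {f g : ℝ → ℝ} {U : Set ℝ} (hU : IsOpen U)
    (hU' : IsPreconnected U) (hf : AnalyticOnNhd ℝ f U) (hg : AnalyticOnNhd ℝ g U)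
    (hfg : ∀ z ∈ U, f z * g z = 0) :
    Set.EqOn f 0 U ∨ Set.EqOn g 0 U := by
  rcases U.eq_empty_or_nonempty with rfl | ⟨z₀, hz₀⟩
  · exact Or.inl (fun z hz => hz.elim)
  have hev : ∀ᶠ z in nhdsWithin z₀ {z₀}ᶜ, f z = 0 ∨ g z = 0 := by
    filter_upwards [nhdsWithin_le_nhds (hU.mem_nhds hz₀)] with z hz
    exact mul_eq_zero.1 (hfg z hz)
  rcases Filter.frequently_or_distrib.1 hev.frequently with h | h
  · exact Or.inl (hf.eqOn_zero_of_preconnected_of_frequently_eq_zero hU' hz₀ h)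
  · exact Or.inr (hg.eqOn_zero_of_preconnected_of_frequently_eq_zero hU' hz₀ h)

lemma exists_factor_eqOn_zero {f g : ℝ → ℝ} {U : Set ℝ} (hU : IsOpen U)
    (hU' : IsPreconnected U) (hne : U.Nonempty)
    (hf : AnalyticOnNhd ℝ f U) (hg : AnalyticOnNhd ℝ g U)
    (l : Multiset (MvPolynomial (Fin 2) ℝ))
    (hl : ∀ z ∈ U, MvPolynomial.eval ![f z, g z] l.prod = 0) :
    ∃ P ∈ l, ∀ z ∈ U, MvPolynomial.eval ![f z, g z] P = 0 := by
  induction l using Multiset.induction_on with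
  | empty => obtain ⟨z, hz⟩ := hne; simpa using hl z hz
  | cons a l ih =>
    simp only [Multiset.prod_cons, map_mul] at hl
    rcases eqOn_zero_or_eqOn_zero_of_mul hU hU' (analytic_mveval hf hg a)
        (analytic_mveval hf hg l.prod) hl with h | h
    · exact ⟨a, Multiset.mem_cons_self a l, fun z hz => h hz⟩
    · obtain ⟨P, hP, hP0⟩ := ih (fun z hz => h hz)
      exact ⟨P, Multiset.mem_cons_of_mem hP, hP0⟩

lemma exists_prime_eqOn_zero {f g : ℝ → ℝ} {U : Set ℝ} (hU : IsOpen U)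
    (hU' : IsPreconnected U) (hne : U.Nonempty)
    (hf : AnalyticOnNhd ℝ f U) (hg : AnalyticOnNhd ℝ g U)
    {P : MvPolynomial (Fin 2) ℝ} (hP : P ≠ 0)
    (hval : ∀ z ∈ U, MvPolynomial.eval ![f z, g z] P = 0) :
    ∃ P₀ : MvPolynomial (Fin 2) ℝ, Prime P₀ ∧ ∀ z ∈ U, MvPolynomial.eval ![f z, g z] P₀ = 0 := by
  classical
  obtain ⟨u, hu⟩ := (UniqueFactorizationMonoid.factors_prod hP)
  have hprod : ∀ z ∈ U,
      MvPolynomial.eval ![f z, g z] (UniqueFactorizationMonoid.factors P).prod = 0 := by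
    intro z hz
    have h1 : MvPolynomial.eval ![f z, g z]
        ((UniqueFactorizationMonoid.factors P).prod * u) = 0 := by
      rw [hu]; exact hval z hz
    rw [map_mul] at h1
    have h2 : IsUnit (MvPolynomial.eval ![f z, g z] (u : MvPolynomial (Fin 2) ℝ)) :=
      (Units.isUnit u).map _
    exact (mul_eq_zero.1 h1).resolve_right h2.ne_zero
  obtain ⟨P₀, hmem, hv⟩ := exists_factor_eqOn_zero hU hU' hne hf hg _ hprod
  exact ⟨P₀, UniqueFactorizationMonoid.prime_of_factor P₀ hmem, hv⟩

/-- Currying into `Polynomial (Polynomial ℝ)`: var 0 becomes inner, var 1 outer. -/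
noncomputable def pp2 : MvPolynomial (Fin 2) ℝ →+* Polynomial (Polynomial ℝ) :=
  MvPolynomial.eval₂Hom
    ((Polynomial.C : Polynomial ℝ →+* Polynomial (Polynomial ℝ)).comp Polynomial.C)
    ![Polynomial.C Polynomial.X, Polynomial.X]

noncomputable def unpp2 : Polynomial (Polynomial ℝ) →+* MvPolynomial (Fin 2) ℝ :=
  Polynomial.eval₂RingHom
    (Polynomial.eval₂RingHom (MvPolynomial.C) (MvPolynomial.X 0)) (MvPolynomial.X 1)

lemma unpp2_pp2 (s : MvPolynomial (Fin 2) ℝ) : unpp2 (pp2 s) = s := by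
  induction s using MvPolynomial.induction_on with
  | C r => simp [pp2, unpp2]
  | add p q hp hq => simp [hp, hq]
  | mul_X p n hp =>
    rw [map_mul, map_mul, hp]
    congr 1
    fin_cases n <;> simp [pp2, unpp2]

lemma pp2_eval (s : MvPolynomial (Fin 2) ℝ) (u v : ℝ) :
    Polynomial.eval v ((pp2 s).map (Polynomial.evalRingHom u)) = MvPolynomial.eval ![u, v] s := by
  induction s using MvPolynomial.induction_on with
  | C r => simp [pp2]
  | add p q hp hq => simp [hp, hq]
  | mul_X p n hp =>
    simp only [map_mul, Polynomial.map_mul, Polynomial.eval_mul, hp]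
    congr 1
    fin_cases n <;> simp [pp2]

/-- A bivariate polynomial vanishing on a product of infinite sets is zero. -/
lemma mv_eq_zero_of_eval_zero (s : MvPolynomial (Fin 2) ℝ) (U V : Set ℝ)
    (hU : U.Infinite) (hV : V.Infinite)
    (hz : ∀ x ∈ U, ∀ y ∈ V, MvPolynomial.eval ![x, y] s = 0) : s = 0 := by
  have h1 : ∀ x ∈ U, (pp2 s).map (Polynomial.evalRingHom x) = 0 := by
    intro x hx
    apply Polynomial.eq_zero_of_infinite_isRoot
    apply hV.mono
    intro v hv
    exact (pp2_eval s x v).trans (hz x hx v hv)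
  have h2 : ∀ i : ℕ, ∀ x ∈ U, Polynomial.eval x ((pp2 s).coeff i) = 0 := by
    intro i x hx
    have h4 : ((pp2 s).map (Polynomial.evalRingHom x)).coeff i = 0 := by
      rw [h1 x hx, Polynomial.coeff_zero]
    rw [Polynomial.coeff_map] at h4
    simpa using h4
  have h3 : pp2 s = 0 := by
    ext i : 1
    rw [Polynomial.coeff_zero]
    apply Polynomial.eq_zero_of_infinite_isRoot
    apply hU.mono
    intro x hx
    exact h2 i x hx
  have := congrArg unpp2 h3
  simpa [unpp2_pp2] using this

lemma eval_curry (g : Fin 2 → Fin 3) (P : MvPolynomial (Fin 2) ℝ) (v : Fin 3 → ℝ) :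
    Polynomial.eval (v 0) ((MvPolynomial.finSuccEquiv ℝ 2 (MvPolynomial.rename g P)).map
      (MvPolynomial.eval (Fin.tail v))) = MvPolynomial.eval (v ∘ g) P := by
  rw [← MvPolynomial.eval_eq_eval_mv_eval', Fin.cons_self_tail, MvPolynomial.eval_rename]

lemma prime_curry (g : Fin 2 → Fin 3) (hg : Function.Injective g)
    {P : MvPolynomial (Fin 2) ℝ} (hP : Prime P) :
    Prime (MvPolynomial.finSuccEquiv ℝ 2 (MvPolynomial.rename g P)) := by
  have h1 : Prime (MvPolynomial.rename g P) := by
    have hco : Subtype.val ∘ (Equiv.ofInjective g hg) = g := by funext i; rfl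
    have heq : MvPolynomial.rename g P =
        MvPolynomial.rename (Subtype.val : Set.range g → Fin 3)
          (MvPolynomial.rename (Equiv.ofInjective g hg) P) := by
      rw [MvPolynomial.rename_rename, hco]
    rw [heq, MvPolynomial.prime_rename_iff]
    exact (MulEquiv.prime_iff (MvPolynomial.renameEquiv ℝ
      (Equiv.ofInjective g hg)).toRingEquiv.toMulEquiv).2 hP
  exact (MulEquiv.prime_iff (MvPolynomial.finSuccEquiv ℝ 2).toRingEquiv.toMulEquiv).2 h1

lemma coeff_curry_support (g : Fin 2 → Fin 3) (P : MvPolynomial (Fin 2) ℝ) (i : ℕ)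
    (j : Fin 2) (hj : (Fin.succ j) ∉ Set.range g) (m : Fin 2 →₀ ℕ)
    (hm : m ∈ (((MvPolynomial.finSuccEquiv ℝ 2) (MvPolynomial.rename g P)).coeff i).support) :
    m j = 0 := by
  have h1 : MvPolynomial.coeff m
      (((MvPolynomial.finSuccEquiv ℝ 2) (MvPolynomial.rename g P)).coeff i) ≠ 0 :=
    MvPolynomial.mem_support_iff.1 hm
  rw [MvPolynomial.finSuccEquiv_coeff_coeff] at h1
  obtain ⟨u, hu, -⟩ := MvPolynomial.coeff_rename_ne_zero _ _ _ h1
  have h2 : (Finsupp.cons i m) (Fin.succ j) = 0 := by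
    rw [← hu]; exact Finsupp.mapDomain_notin_range u _ hj
  rwa [Finsupp.cons_succ] at h2

lemma eval_eq_of_support (s : MvPolynomial (Fin 2) ℝ) (j : Fin 2)
    (hj : ∀ m ∈ s.support, m j = 0)
    (v v' : Fin 2 → ℝ) (hv : ∀ i, i ≠ j → v i = v' i) :
    MvPolynomial.eval v s = MvPolynomial.eval v' s := by
  rw [MvPolynomial.eval_eq', MvPolynomial.eval_eq']
  apply Finset.sum_congr rfl
  intro m hm
  congr 1
  apply Finset.prod_congr rfl
  intro i _
  by_cases hij : i = j
  · subst hij; rw [hj m hm]; simp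
  · rw [hv i hij]

lemma isPrimitive_of_prime {R : Polynomial (MvPolynomial (Fin 2) ℝ)}
    (hR : Prime R) (hdeg : R.natDegree ≠ 0) : R.IsPrimitive := by
  intro r hr
  obtain ⟨t, ht⟩ := hr
  rcases hR.irreducible.isUnit_or_isUnit ht with h | h
  · exact Polynomial.isUnit_C.1 h
  · exfalso
    obtain ⟨w, hw, hwt⟩ := Polynomial.isUnit_iff.1 h
    apply hdeg
    rw [ht, ← hwt, ← Polynomial.C_mul, Polynomial.natDegree_C]

end Helpers

/-- If `h` (here `h(t) = H_{zz}(z,t)` for fixed `z`) is analytic, algebraic and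
nonconstant (`h' ≢ 0`) on an interval, `A` is analytic mapping an interval `J` into it,
and the composite `Φ = h ∘ A` is algebraic on `J`, then `A` is algebraic on `J`. -/
theorem algebraic_of_comp_with_nonconstant_algebraic (a b c d : ℝ) (hab : a < b)
    (hcd : c < d) (h A : ℝ → ℝ)
    (hh : AnalyticOn ℝ h (Set.Ioo a b))
    (hhalg : IsAlgebraicOn h (Set.Ioo a b))
    (hnc : ∃ t ∈ Set.Ioo a b, deriv h t ≠ 0)
    (hA : AnalyticOn ℝ A (Set.Ioo c d))
    (hmap : Set.MapsTo A (Set.Ioo c d) (Set.Ioo a b))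
    (hΦ : IsAlgebraicOn (fun p => h (A p)) (Set.Ioo c d)) :
    IsAlgebraicOn A (Set.Ioo c d) := by
  classical
  obtain ⟨P, hPne, hPval⟩ := hhalg
  obtain ⟨Q, hQne, hQval⟩ := hΦ
  rw [isOpen_Ioo.analyticOn_iff_analyticOnNhd] at hh hA
  have hΦa : AnalyticOnNhd ℝ (fun p => h (A p)) (Set.Ioo c d) := hh.comp hA hmap
  have hIab : (Set.Ioo a b).Nonempty := Set.nonempty_Ioo.2 hab
  have hIcd : (Set.Ioo c d).Nonempty := Set.nonempty_Ioo.2 hcd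
  obtain ⟨P₀, hP₀p, hP₀v⟩ := exists_prime_eqOn_zero isOpen_Ioo isPreconnected_Ioo hIab
    analyticOnNhd_id hh hPne hPval
  obtain ⟨Q₀, hQ₀p, hQ₀v⟩ := exists_prime_eqOn_zero isOpen_Ioo isPreconnected_Ioo hIcd
    analyticOnNhd_id hΦa hQne hQval
  -- curried polynomials in (ℝ[x,y])[w]; var 0 of S2 is "x" (the J-variable), var 1 is "y"
  set gP : Fin 2 → Fin 3 := ![2, 0] with hgPdef
  set gQ : Fin 2 → Fin 3 := ![1, 0] with hgQdef
  have hgP : Function.Injective gP := by decide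
  have hgQ : Function.Injective gQ := by decide
  set BP : Polynomial (MvPolynomial (Fin 2) ℝ) :=
    (MvPolynomial.finSuccEquiv ℝ 2) (MvPolynomial.rename gP P₀) with hBPdef
  set BQ : Polynomial (MvPolynomial (Fin 2) ℝ) :=
    (MvPolynomial.finSuccEquiv ℝ 2) (MvPolynomial.rename gQ Q₀) with hBQdef
  have hBPp : Prime BP := prime_curry gP hgP hP₀p
  have hBQp : Prime BQ := prime_curry gQ hgQ hQ₀p
  have hBPne : BP ≠ 0 := hBPp.ne_zero
  have hBQne : BQ ≠ 0 := hBQp.ne_zero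
  -- evaluation identities
  have hPev : ∀ x0 y0 w0 : ℝ,
      Polynomial.eval w0 (BP.map (MvPolynomial.eval ![x0, y0])) =
        MvPolynomial.eval ![y0, w0] P₀ := by
    intro x0 y0 w0
    have ht : Fin.tail ![w0, x0, y0] = ![x0, y0] := by
      funext i; fin_cases i <;> rfl
    have hc : (![w0, x0, y0]) ∘ gP = ![y0, w0] := by
      funext i; fin_cases i <;> rfl
    have := eval_curry gP P₀ ![w0, x0, y0]
    rw [ht, hc] at this
    simpa using this
  have hQev : ∀ x0 y0 w0 : ℝ,
      Polynomial.eval w0 (BQ.map (MvPolynomial.eval ![x0, y0])) =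
        MvPolynomial.eval ![x0, w0] Q₀ := by
    intro x0 y0 w0
    have ht : Fin.tail ![w0, x0, y0] = ![x0, y0] := by
      funext i; fin_cases i <;> rfl
    have hc : (![w0, x0, y0]) ∘ gQ = ![x0, w0] := by
      funext i; fin_cases i <;> rfl
    have := eval_curry gQ Q₀ ![w0, x0, y0]
    rw [ht, hc] at this
    simpa using this
  -- positive degrees
  have hdegP : BP.natDegree ≠ 0 := by
    intro h0
    have hBPC : BP = Polynomial.C (BP.coeff 0) := Polynomial.eq_C_of_natDegree_eq_zero h0
    have hs : BP.coeff 0 = 0 := by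
      apply mv_eq_zero_of_eval_zero _ Set.univ (Set.Ioo a b) Set.infinite_univ
        (Set.Ioo_infinite hab)
      intro x0 _ t ht
      have hev := hPev x0 t (h t)
      rw [hBPC, Polynomial.map_C, Polynomial.eval_C] at hev
      rw [hev]
      exact hP₀v t ht
    exact hBPne (by rw [hBPC, hs, map_zero])
  have hdegQ : BQ.natDegree ≠ 0 := by
    intro h0
    have hBQC : BQ = Polynomial.C (BQ.coeff 0) := Polynomial.eq_C_of_natDegree_eq_zero h0
    have hs : BQ.coeff 0 = 0 := by
      apply mv_eq_zero_of_eval_zero _ (Set.Ioo c d) Set.univ (Set.Ioo_infinite hcd)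
        Set.infinite_univ
      intro p hp y0 _
      have hev := hQev p y0 (h (A p))
      rw [hBQC, Polynomial.map_C, Polynomial.eval_C] at hev
      rw [hev]
      exact hQ₀v p hp
    exact hBQne (by rw [hBQC, hs, map_zero])
  -- pass to the fraction field
  letI : NormalizationMonoid (MvPolynomial (Fin 2) ℝ) :=
    UniqueFactorizationMonoid.normalizationMonoid.toNormalizationMonoid
  letI := UniqueFactorizationMonoid.toNormalizedGCDMonoid (MvPolynomial (Fin 2) ℝ)
  set F := FractionRing (MvPolynomial (Fin 2) ℝ) with hFdef
  have hφinj : Function.Injective (algebraMap (MvPolynomial (Fin 2) ℝ) F) :=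
    IsFractionRing.injective _ _
  set P1 : Polynomial F := BP.map (algebraMap (MvPolynomial (Fin 2) ℝ) F) with hP1def
  set Q1 : Polynomial F := BQ.map (algebraMap (MvPolynomial (Fin 2) ℝ) F) with hQ1def
  have hP1irr : Irreducible P1 :=
    ((isPrimitive_of_prime hBPp hdegP).irreducible_iff_irreducible_map_fraction_map).1
      hBPp.irreducible
  have hQ1irr : Irreducible Q1 :=
    ((isPrimitive_of_prime hBQp hdegQ).irreducible_iff_irreducible_map_fraction_map).1
      hBQp.irreducible
  by_cases hdvd : P1 ∣ Q1
  · -- dvd case: contradiction with nonconstancy of h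
    exfalso
    obtain ⟨V1, hV1⟩ := hdvd
    have hVu : IsUnit V1 := by
      rcases hQ1irr.isUnit_or_isUnit hV1 with h' | h'
      · exact absurd h' hP1irr.not_isUnit
      · exact h'
    obtain ⟨f, hfu, hCf⟩ := Polynomial.isUnit_iff.1 hVu
    set N := BP.natDegree with hNdef
    have hP1deg : P1.natDegree = N := Polynomial.natDegree_map_eq_of_injective hφinj BP
    have hQ1deg : Q1.natDegree = N := by
      rw [hV1, ← hCf, Polynomial.natDegree_mul_C hfu.ne_zero, hP1deg]
    have hNQ : BQ.natDegree = N := by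
      rw [← Polynomial.natDegree_map_eq_of_injective hφinj BQ]; exact hQ1deg
    -- coefficient cross relations
    have hQc : ∀ j : ℕ, algebraMap (MvPolynomial (Fin 2) ℝ) F (BQ.coeff j) =
        algebraMap (MvPolynomial (Fin 2) ℝ) F (BP.coeff j) * f := by
      intro j
      have := congrArg (fun R : Polynomial F => R.coeff j) hV1
      simpa [hP1def, hQ1def, Polynomial.coeff_map, ← hCf, Polynomial.coeff_mul_C] using this
    have hcoeff : ∀ i : ℕ, BP.coeff i * BQ.coeff N = BP.coeff N * BQ.coeff i := by
      intro i
      apply hφinj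
      rw [map_mul, map_mul, hQc, hQc]
      ring
    have haN : BP.coeff N ≠ 0 := by
      have := Polynomial.leadingCoeff_ne_zero.2 hBPne
      rwa [Polynomial.leadingCoeff] at this
    have hbN : BQ.coeff N ≠ 0 := by
      have := Polynomial.leadingCoeff_ne_zero.2 hBQne
      rwa [Polynomial.leadingCoeff, hNQ] at this
    -- supports
    have hsuppQ : ∀ (i : ℕ) (m : Fin 2 →₀ ℕ), m ∈ (BQ.coeff i).support → m 1 = 0 := by
      intro i m hm
      exact coeff_curry_support gQ Q₀ i 1 (by decide) m hm
    have hsuppP : ∀ (i : ℕ) (m : Fin 2 →₀ ℕ), m ∈ (BP.coeff i).support → m 0 = 0 := by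
      intro i m hm
      exact coeff_curry_support gP P₀ i 0 (by decide) m hm
    -- pick a point where the leading coefficient of BQ is nonzero
    have hbNex : ∃ x0 y0 : ℝ, MvPolynomial.eval ![x0, y0] (BQ.coeff N) ≠ 0 := by
      by_contra hcon
      push_neg at hcon
      apply hbN
      apply MvPolynomial.funext (q := 0)
      intro x
      rw [map_zero]
      have hx : x = ![x 0, x 1] := by funext i; fin_cases i <;> rfl
      rw [hx]
      exact hcon (x 0) (x 1)
    obtain ⟨x0, y0, hx0⟩ := hbNex
    set β : ℕ → ℝ := fun i => MvPolynomial.eval ![x0, y0] (BQ.coeff i) with hβdef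
    set α : ℕ → ℝ → ℝ := fun i t => MvPolynomial.eval ![x0, t] (BP.coeff i) with hαdef
    have hβconst : ∀ (i : ℕ) (t : ℝ), MvPolynomial.eval ![x0, t] (BQ.coeff i) = β i := by
      intro i t
      apply eval_eq_of_support _ 1 (hsuppQ i)
      intro k hk
      fin_cases k
      · rfl
      · exact absurd rfl hk
    have hrel : ∀ (i : ℕ) (t : ℝ), α i t * β N = α N t * β i := by
      intro i t
      have h2 := congrArg (MvPolynomial.eval ![x0, t]) (hcoeff i)
      rw [map_mul, map_mul, hβconst N t, hβconst i t] at h2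
      simp only [hαdef]
      exact h2
    -- α N is not identically zero
    have haNex : ∃ y1 : ℝ, α N y1 ≠ 0 := by
      by_contra hcon
      push_neg at hcon
      apply haN
      apply MvPolynomial.funext (q := 0)
      intro x
      rw [map_zero]
      have hx : x = ![x 0, x 1] := by funext i; fin_cases i <;> rfl
      rw [hx]
      have : MvPolynomial.eval ![x 0, x 1] (BP.coeff N) =
          MvPolynomial.eval ![x0, x 1] (BP.coeff N) := by
        apply eval_eq_of_support _ 0 (hsuppP N)
        intro k hk
        fin_cases k
        · exact absurd rfl hk
        · rfl
      rw [this]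
      exact hcon (x 1)
    obtain ⟨y1, hy1⟩ := haNex
    -- the real polynomial W with coefficients β i
    set W : Polynomial ℝ :=
      ∑ i ∈ Finset.range (N + 1), Polynomial.C (β i) * Polynomial.X ^ i with hWdef
    have hWcoeff : W.coeff N = β N := by
      rw [hWdef, Polynomial.finset_sum_coeff]
      rw [Finset.sum_eq_single N]
      · simp
      · intro k _ hk
        simp [Polynomial.coeff_C_mul, Polynomial.coeff_X_pow, Ne.symm hk]
      · intro hk
        exact absurd (Finset.self_mem_range_succ N) hk
    have hWne : W ≠ 0 := by
      intro hW
      rw [hW, Polynomial.coeff_zero] at hWcoeff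
      exact hx0 hWcoeff.symm
    have hWev : ∀ t : ℝ, W.eval t = ∑ i ∈ Finset.range (N + 1), β i * t ^ i := by
      intro t
      rw [hWdef, Polynomial.eval_finset_sum]
      simp [Polynomial.eval_mul, Polynomial.eval_pow]
    -- main vanishing identity
    have hkey : ∀ t ∈ Set.Ioo a b, α N t * W.eval (h t) = 0 := by
      intro t ht
      have hsum0 : ∑ i ∈ Finset.range (N + 1), α i t * h t ^ i = 0 := by
        have hmapdeg : (BP.map (MvPolynomial.eval ![x0, t])).natDegree < N + 1 :=
          Nat.lt_succ_of_le Polynomial.natDegree_map_le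
        have h1 := Polynomial.eval_eq_sum_range' hmapdeg (h t)
        rw [hPev x0 t (h t), hP₀v t ht] at h1
        rw [show (∑ i ∈ Finset.range (N + 1), α i t * h t ^ i) =
            ∑ i ∈ Finset.range (N + 1),
              (BP.map (MvPolynomial.eval ![x0, t])).coeff i * h t ^ i from
          Finset.sum_congr rfl fun i _ => by rw [Polynomial.coeff_map, hαdef]]
        exact h1.symm
      have hswap : α N t * W.eval (h t) =
          β N * ∑ i ∈ Finset.range (N + 1), α i t * h t ^ i := by
        rw [hWev, Finset.mul_sum, Finset.mul_sum]
        apply Finset.sum_congr rfl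
        intro i _
        linear_combination (h t ^ i) * (hrel i t).symm
      rw [hswap, hsum0, mul_zero]
    -- α N has finitely many zeros
    set rα : Polynomial ℝ := (pp2 (BP.coeff N)).map (Polynomial.evalRingHom x0) with hrαdef
    have hrαeval : ∀ t : ℝ, rα.eval t = α N t := fun t => pp2_eval (BP.coeff N) x0 t
    have hrαne : rα ≠ 0 := by
      intro hz
      apply hy1
      rw [← hrαeval, hz, Polynomial.eval_zero]
    have hFfin : {t : ℝ | rα.IsRoot t}.Finite := by
      rcases ({t : ℝ | rα.IsRoot t}).finite_or_infinite with hf | hinf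
      · exact hf
      · exact absurd (Polynomial.eq_zero_of_infinite_isRoot rα hinf) hrαne
    -- conclude W (h t) = 0 on all of (a,b), by continuity
    have hWh : ∀ t ∈ Set.Ioo a b, W.eval (h t) = 0 := by
      intro t ht
      set G : ℝ → ℝ := fun s => W.eval (h s) with hGdef
      have hGcont : ContinuousAt G t :=
        (Polynomial.continuous W).continuousAt.comp ((hh t ht).continuousAt)
      have hev : ∀ᶠ s in nhdsWithin t {t}ᶜ, G s = 0 := by
        have h1 : ∀ᶠ s in nhdsWithin t {t}ᶜ, s ∈ Set.Ioo a b :=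
          nhdsWithin_le_nhds (isOpen_Ioo.mem_nhds ht)
        have h2 : ∀ᶠ s in nhdsWithin t {t}ᶜ, s ∉ {s : ℝ | rα.IsRoot s} \ {t} := by
          apply nhdsWithin_le_nhds
          apply ((hFfin.diff : ({t : ℝ | rα.IsRoot t} \ {t}).Finite).isClosed.isOpen_compl).mem_nhds
          simp
        have h3 : ∀ᶠ s in nhdsWithin t {t}ᶜ, s ≠ t := by
          filter_upwards [self_mem_nhdsWithin] with s hs
          exact hs
        filter_upwards [h1, h2, h3] with s hs1 hs2 hs3
        have hroot : ¬ rα.IsRoot s := fun hr => hs2 ⟨hr, hs3⟩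
        have hαs : α N s ≠ 0 := fun hz => hroot (by rwa [Polynomial.IsRoot, hrαeval])
        have := hkey s hs1
        rcases mul_eq_zero.1 this with h' | h'
        · exact absurd h' hαs
        · exact h'
      have h1 : Filter.Tendsto G (nhdsWithin t {t}ᶜ) (nhds (G t)) :=
        hGcont.continuousWithinAt
      have h2 : Filter.Tendsto G (nhdsWithin t {t}ᶜ) (nhds 0) := by
        have hev' : G =ᶠ[nhdsWithin t {t}ᶜ] (fun _ => 0) := hev
        exact Filter.Tendsto.congr' hev'.symm tendsto_const_nhds
      exact tendsto_nhds_unique h1 h2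
    -- hence h is constant on (a,b)
    have hWroots : {s : ℝ | W.IsRoot s}.Finite := by
      rcases ({s : ℝ | W.IsRoot s}).finite_or_infinite with hf | hinf
      · exact hf
      · exact absurd (Polynomial.eq_zero_of_infinite_isRoot W hinf) hWne
    have hconst : ∀ t1 ∈ Set.Ioo a b, ∀ t2 ∈ Set.Ioo a b, h t1 = h t2 := by
      have key : ∀ t1 ∈ Set.Ioo a b, ∀ t2 ∈ Set.Ioo a b, t1 ≤ t2 → h t1 = h t2 := by
        intro t1 ht1 t2 ht2 h12
        by_contra hne
        have hIcc : Set.Icc t1 t2 ⊆ Set.Ioo a b := Set.Icc_subset _ ht1 ht2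
        have hcont : ContinuousOn h (Set.Icc t1 t2) := (hh.continuousOn).mono hIcc
        have himg : h '' Set.Icc t1 t2 ⊆ {s : ℝ | W.IsRoot s} := by
          rintro s ⟨x, hx, rfl⟩
          exact hWh x (hIcc hx)
        rcases lt_or_gt_of_ne hne with hlt | hlt
        · have hsub : Set.Icc (h t1) (h t2) ⊆ {s : ℝ | W.IsRoot s} :=
            (intermediate_value_Icc h12 hcont).trans himg
          exact (Set.Icc_infinite hlt) (hWroots.subset hsub)
        · have hsub : Set.Icc (h t2) (h t1) ⊆ {s : ℝ | W.IsRoot s} :=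
            (intermediate_value_Icc' h12 hcont).trans himg
          exact (Set.Icc_infinite hlt) (hWroots.subset hsub)
      intro t1 ht1 t2 ht2
      rcases le_total t1 t2 with h12 | h12
      · exact key t1 ht1 t2 ht2 h12
      · exact (key t2 ht2 t1 ht1 h12).symm
    obtain ⟨t₀, ht₀, hder⟩ := hnc
    apply hder
    have heq : h =ᶠ[nhds t₀] fun _ => h t₀ := by
      filter_upwards [isOpen_Ioo.mem_nhds ht₀] with s hs
      exact hconst s hs t₀ ht₀
    rw [heq.deriv_eq, deriv_const]
  · -- coprime case: Bézout and clearing denominators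
    have hcop : IsCoprime P1 Q1 := (hP1irr.coprime_iff_not_dvd).2 hdvd
    obtain ⟨u, v, huv⟩ := hcop
    obtain ⟨du, hdu⟩ := IsLocalization.integerNormalization_map_to_map
      (nonZeroDivisors (MvPolynomial (Fin 2) ℝ)) u
    obtain ⟨dv, hdv⟩ := IsLocalization.integerNormalization_map_to_map
      (nonZeroDivisors (MvPolynomial (Fin 2) ℝ)) v
    set u' := IsLocalization.integerNormalization
      (nonZeroDivisors (MvPolynomial (Fin 2) ℝ)) u with hu'def
    set v' := IsLocalization.integerNormalization
      (nonZeroDivisors (MvPolynomial (Fin 2) ℝ)) v with hv'def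
    have hsmul : ∀ (e : ↥(nonZeroDivisors (MvPolynomial (Fin 2) ℝ))) (w : Polynomial F),
        (e : MvPolynomial (Fin 2) ℝ) • w =
          Polynomial.C (algebraMap (MvPolynomial (Fin 2) ℝ) F e) * w := by
      intro e w
      rw [Algebra.smul_def, IsScalarTower.algebraMap_apply (MvPolynomial (Fin 2) ℝ) F
        (Polynomial F), Polynomial.algebraMap_eq]
    have hEeq : u' * Polynomial.C (dv : MvPolynomial (Fin 2) ℝ) * BP +
        v' * Polynomial.C (du : MvPolynomial (Fin 2) ℝ) * BQ =
        Polynomial.C ((du : MvPolynomial (Fin 2) ℝ) * (dv : MvPolynomial (Fin 2) ℝ)) := by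
      apply Polynomial.map_injective _ hφinj
      rw [Polynomial.map_add, Polynomial.map_mul, Polynomial.map_mul, Polynomial.map_mul,
        Polynomial.map_mul, Polynomial.map_C, Polynomial.map_C, Polynomial.map_C,
        hdu, hdv, hsmul, hsmul, map_mul, Polynomial.C_mul]
      rw [← hP1def, ← hQ1def]
      linear_combination (Polynomial.C (algebraMap (MvPolynomial (Fin 2) ℝ) F du) *
        Polynomial.C (algebraMap (MvPolynomial (Fin 2) ℝ) F dv)) * huv
    refine ⟨(du : MvPolynomial (Fin 2) ℝ) * (dv : MvPolynomial (Fin 2) ℝ),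
      mul_ne_zero (nonZeroDivisors.coe_ne_zero du) (nonZeroDivisors.coe_ne_zero dv), ?_⟩
    intro p hp
    have hE := congrArg (fun R : Polynomial (MvPolynomial (Fin 2) ℝ) =>
      Polynomial.eval (h (A p)) (R.map (MvPolynomial.eval ![p, A p]))) hEeq
    simp only [Polynomial.map_add, Polynomial.map_mul, Polynomial.map_C, Polynomial.eval_add,
      Polynomial.eval_mul, Polynomial.eval_C] at hE
    rw [hPev p (A p) (h (A p)), hQev p (A p) (h (A p)), hP₀v (A p) (hmap hp), hQ₀v p hp] at hE
    simpa using hE.symm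
end

section
/- Contrapositive obstruction: with h analytic, algebraic, and nonconstant on an interval, and A analytic with A not algebraic, the composite Φ = h ∘ A is not algebraic. -/
private lemma isAlgebraic_up {K : Type*} [Field K] {R S : Type*} [CommRing R] [CommRing S]
    [Algebra R K] [Algebra S K] (f : R →+* S)
    (hf : ∀ r, algebraMap S K (f r) = algebraMap R K r)
    (hinj : Function.Injective (algebraMap R K))
    {β : K} (hβ : IsAlgebraic R β) : IsAlgebraic S β := by
  obtain ⟨p, hp, hpe⟩ := hβ
  have hfinj : Function.Injective f := by
    intro u v huv
    exact hinj (by rw [← hf, ← hf, huv])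
  refine ⟨p.map f, by simpa [Polynomial.map_ne_zero_iff hfinj] using hp, ?_⟩
  rw [Polynomial.aeval_def, Polynomial.eval₂_map,
    show (algebraMap S K).comp f = algebraMap R K from RingHom.ext hf, ← Polynomial.aeval_def]
  exact hpe

private lemma key_dep {F K : Type*} [Field F] [Field K] [Algebra F K]
    (x α β : K) (hβt : Transcendental F β)
    (hxβ : ¬ AlgebraicIndependent F ![x, β])
    (hαβ : ¬ AlgebraicIndependent F ![α, β]) :
    ¬ AlgebraicIndependent F ![x, α] := by
  intro hind
  classical
  have hx1 : AlgebraicIndependent F ![x] := by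
    rw [algebraicIndependent_iff_transcendental]
    simpa using hind.transcendental 0
  have hβ1 : AlgebraicIndependent F ![β] := algebraicIndependent_iff_transcendental.2 hβt
  -- α transcendental over F[x]
  have htα : Transcendental (Algebra.adjoin F (Set.range ![x])) α := by
    refine (hx1.option_iff_transcendental α).mp ?_
    have := hind.comp (fun o : Option (Fin 1) => o.elim 1 (fun _ => 0))
      (by intro u v huv; cases u <;> cases v <;> simp_all <;> omega)
    convert this using 1
    funext o; cases o with
    | none => rfl
    | some i => fin_cases i; rfl
  -- β algebraic over F[x]
  have hβalg : IsAlgebraic (Algebra.adjoin F (Set.range ![x])) β := by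
    by_contra htr
    have hopt := (hx1.option_iff_transcendental β).mpr htr
    have := hopt.comp (![some 0, none] : Fin 2 → Option (Fin 1))
      (by intro u v huv; fin_cases u <;> fin_cases v <;> simp_all)
    apply hxβ
    convert this using 1
    funext i; fin_cases i <;> rfl
  -- α algebraic over F[β]
  have hαalg : IsAlgebraic (Algebra.adjoin F (Set.range ![β])) α := by
    by_contra htr
    have hopt := (hβ1.option_iff_transcendental α).mpr htr
    have := hopt.comp (![none, some 0] : Fin 2 → Option (Fin 1))
      (by intro u v huv; fin_cases u <;> fin_cases v <;> simp_all)
    apply hαβ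
    convert this using 1
    funext i; fin_cases i <;> rfl
  -- pass to fields
  set Rx := Algebra.adjoin F (Set.range ![x]) with hRx
  set Fx := IntermediateField.adjoin F (Set.range ![x]) with hFx
  have hleFx : ∀ y ∈ Rx, y ∈ Fx := fun y hy =>
    IntermediateField.algebra_adjoin_le_adjoin F _ hy
  have hβFx : IsAlgebraic Fx β :=
    isAlgebraic_up (K := K)
      { toFun := fun r : Rx => (⟨r.1, hleFx r.1 r.2⟩ : Fx),
        map_one' := rfl, map_mul' := fun _ _ => rfl,
        map_zero' := rfl, map_add' := fun _ _ => rfl }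
      (fun _ => rfl) Subtype.val_injective hβalg
  set L := IntermediateField.adjoin Fx ({β} : Set K) with hL
  haveI hLalg : Algebra.IsAlgebraic Fx L :=
    IntermediateField.isAlgebraic_adjoin_simple hβFx.isIntegral
  have hmemL : ∀ y ∈ Algebra.adjoin F (Set.range ![β]), y ∈ L := by
    intro y hy
    have hsub : Algebra.adjoin F (Set.range ![β]) ≤
        (IntermediateField.restrictScalars F L).toSubalgebra := by
      apply Algebra.adjoin_le
      intro z hz
      rcases hz with ⟨i, rfl⟩
      fin_cases i
      exact IntermediateField.mem_adjoin_simple_self Fx β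
    exact hsub hy
  have hαL : IsAlgebraic L α :=
    isAlgebraic_up (K := K)
      { toFun := fun r : Algebra.adjoin F (Set.range ![β]) => (⟨r.1, hmemL r.1 r.2⟩ : L),
        map_one' := rfl, map_mul' := fun _ _ => rfl,
        map_zero' := rfl, map_add' := fun _ _ => rfl }
      (fun _ => rfl) Subtype.val_injective hαalg
  haveI : Algebra.IsIntegral Fx L := Algebra.isAlgebraic_iff_isIntegral.mp hLalg
  have hαFx : IsAlgebraic Fx α := (isIntegral_trans α hαL.isIntegral).isAlgebraic
  -- Fx is the fraction field of Rx
  letI : Algebra Rx Fx := RingHom.toAlgebra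
    { toFun := fun r : Rx => (⟨r.1, hleFx r.1 r.2⟩ : Fx),
      map_one' := rfl, map_mul' := fun _ _ => rfl,
      map_zero' := rfl, map_add' := fun _ _ => rfl }
  haveI : IsScalarTower Rx Fx K := IsScalarTower.of_algebraMap_eq fun _ => rfl
  haveI : NoZeroDivisors Rx := ⟨by
    rintro u v huv
    have : (u : K) * (v : K) = 0 := congrArg Subtype.val huv
    rcases mul_eq_zero.mp this with h | h
    · exact Or.inl (Subtype.ext h)
    · exact Or.inr (Subtype.ext h)⟩
  have hmemRx : ∀ q : MvPolynomial (Fin 1) F, MvPolynomial.aeval ![x] q ∈ Rx := by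
    intro q
    rw [hRx, Algebra.adjoin_range_eq_range_aeval]
    exact ⟨q, rfl⟩
  haveI : IsFractionRing Rx Fx := by
    constructor
    constructor
    · rintro ⟨y, hy⟩
      have hy0 : y ≠ 0 := nonZeroDivisors.ne_zero hy
      refine isUnit_iff_ne_zero.mpr (fun h0 => hy0 ?_)
      have h1 : ((algebraMap Rx Fx y : Fx) : K) = 0 := by rw [h0]; rfl
      exact Subtype.ext h1
    · intro z
      obtain ⟨r, s, hrs⟩ := (IntermediateField.mem_adjoin_range_iff F ![x] (z : K)).mp z.2
      by_cases hs : (MvPolynomial.aeval ![x]) s = 0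
      · refine ⟨⟨0, 1⟩, Subtype.ext ?_⟩
        show (z : K) * _ = _
        have hz : (z : K) = 0 := by rw [hrs, hs, div_zero]
        simp [hz]
      · refine ⟨⟨⟨MvPolynomial.aeval ![x] r, hmemRx r⟩,
          ⟨⟨MvPolynomial.aeval ![x] s, hmemRx s⟩,
            mem_nonZeroDivisors_of_ne_zero (fun h0 => hs (congrArg Subtype.val h0))⟩⟩,
          Subtype.ext ?_⟩
        show (z : K) * MvPolynomial.aeval ![x] s = MvPolynomial.aeval ![x] r
        rw [hrs, div_mul_cancel₀ _ hs]
    · intro u v huv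
      have h1 : ((algebraMap Rx Fx u : Fx) : K) = ((algebraMap Rx Fx v : Fx) : K) := by rw [huv]
      have : u = v := Subtype.ext h1
      exact ⟨1, by rw [this]⟩
  have : IsAlgebraic Rx α := (IsFractionRing.isAlgebraic_iff Rx Fx K).mpr hαFx
  exact htα this

/-- The algebra of (restrictions of) analytic functions on the interval `(u, v)`. -/
private def aSubalg (u v : ℝ) : Subalgebra ℝ ((Set.Ioo u v) → ℝ) where
  carrier := {f | ∃ F : ℝ → ℝ, AnalyticOnNhd ℝ F (Set.Ioo u v) ∧ ∀ z : Set.Ioo u v, f z = F z}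
  mul_mem' := by
    rintro f g ⟨F, hF, hf⟩ ⟨G, hG, hg⟩
    exact ⟨fun t => F t * G t, hF.mul hG, fun z => by simp [hf z, hg z]⟩
  add_mem' := by
    rintro f g ⟨F, hF, hf⟩ ⟨G, hG, hg⟩
    exact ⟨fun t => F t + G t, hF.add hG, fun z => by simp [hf z, hg z]⟩
  algebraMap_mem' := fun c => ⟨fun _ => c, analyticOnNhd_const, fun _ => rfl⟩

private lemma aSubalg_isDomain {u v : ℝ} (huv : u < v) : IsDomain (aSubalg u v) := by
  obtain ⟨z0, hz0⟩ := Set.nonempty_Ioo.mpr huv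
  haveI : Nontrivial (aSubalg u v) := by
    refine ⟨0, 1, fun hc => ?_⟩
    have := congrArg (fun f : aSubalg u v => (f : Set.Ioo u v → ℝ) ⟨z0, hz0⟩) hc
    simpa using this
  haveI : NoZeroDivisors (aSubalg u v) := by
    constructor
    intro f g hfg
    by_cases hf0 : f = 0
    · exact Or.inl hf0
    right
    obtain ⟨F, hF, hfF⟩ := f.2
    obtain ⟨G, hG, hgG⟩ := g.2
    -- find a point where F is nonzero
    have hx : ∃ z1 : Set.Ioo u v, F z1 ≠ 0 := by
      by_contra hno
      push_neg at hno
      apply hf0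
      apply Subtype.ext; funext t
      rw [show ((f : aSubalg u v) : Set.Ioo u v → ℝ) t = F t from hfF t, hno t]
      rfl
    obtain ⟨z1, hz1⟩ := hx
    have hGz : G =ᶠ[nhds (z1 : ℝ)] 0 := by
      have h1 : ∀ᶠ t in nhds (z1 : ℝ), F t ≠ 0 :=
        ((hF z1 z1.2).continuousAt).eventually_ne hz1
      have h2 : ∀ᶠ t in nhds (z1 : ℝ), t ∈ Set.Ioo u v :=
        isOpen_Ioo.eventually_mem z1.2
      filter_upwards [h1, h2] with t hFt htm
      have hmul : F t * G t = 0 := by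
        have := congrArg (fun f : aSubalg u v => (f : Set.Ioo u v → ℝ) ⟨t, htm⟩) hfg
        simpa [← hfF ⟨t, htm⟩, ← hgG ⟨t, htm⟩] using this
      have := mul_eq_zero.mp hmul
      tauto
    have hG0 : Set.EqOn G 0 (Set.Ioo u v) :=
      hG.eqOn_zero_of_preconnected_of_eventuallyEq_zero isPreconnected_Ioo z1.2 hGz
    apply Subtype.ext; funext t
    rw [show ((g : aSubalg u v) : Set.Ioo u v → ℝ) t = G t from hgG t, hG0 t.2]
    rfl
  exact NoZeroDivisors.to_isDomain _

/-- Evaluation at a point, as an algebra homomorphism. -/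
private noncomputable def evalA (u v : ℝ) (t : Set.Ioo u v) : aSubalg u v →ₐ[ℝ] ℝ :=
  (Pi.evalAlgHom ℝ (fun _ => ℝ) t).comp (aSubalg u v).val

private lemma analytic_eval {A : ℝ → ℝ} {s : Set ℝ} (hA : AnalyticOnNhd ℝ A s)
    (R : MvPolynomial (Fin 2) ℝ) :
    AnalyticOnNhd ℝ (fun p => MvPolynomial.eval ![p, A p] R) s := by
  induction R using MvPolynomial.induction_on with
  | C r => simpa using (analyticOnNhd_const : AnalyticOnNhd ℝ (fun _ : ℝ => r) s)
  | add p q hp hq =>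
    have : (fun t => MvPolynomial.eval ![t, A t] (p + q)) =
        fun t => MvPolynomial.eval ![t, A t] p + MvPolynomial.eval ![t, A t] q := by
      funext t; simp
    rw [this]; exact hp.add hq
  | mul_X p i hp =>
    have : (fun t => MvPolynomial.eval ![t, A t] (p * MvPolynomial.X i)) =
        fun t => MvPolynomial.eval ![t, A t] p * (![t, A t] i) := by
      funext t; simp
    rw [this]
    refine hp.mul ?_
    fin_cases i
    · simpa using (analyticOnNhd_id : AnalyticOnNhd ℝ (fun t : ℝ => t) s)
    · simpa using hA

private lemma germ_dep {S : Type*} [CommRing S] [IsDomain S] [Algebra ℝ S]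
    {T : Type*} [Nonempty T] (ev : T → (S →ₐ[ℝ] ℝ))
    (hsep : ∀ s : S, (∀ t, ev t s = 0) → s = 0)
    (x α β : S)
    (hβt : ∀ q : Polynomial ℝ, q ≠ 0 → ∃ t, Polynomial.eval (ev t β) q ≠ 0)
    (Q : MvPolynomial (Fin 2) ℝ) (hQ0 : Q ≠ 0)
    (hQ : ∀ t, MvPolynomial.eval ![ev t x, ev t β] Q = 0)
    (P : MvPolynomial (Fin 2) ℝ) (hP0 : P ≠ 0)
    (hP : ∀ t, MvPolynomial.eval ![ev t α, ev t β] P = 0) :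
    ∃ R : MvPolynomial (Fin 2) ℝ, R ≠ 0 ∧
      ∀ t, MvPolynomial.eval ![ev t x, ev t α] R = 0 := by
  classical
  set K := FractionRing S with hK
  set φ := algebraMap S K with hφ
  have hφinj : Function.Injective φ := IsFractionRing.injective S K
  have hMv : ∀ (g : Fin 2 → ℝ) (R : MvPolynomial (Fin 2) ℝ),
      MvPolynomial.aeval (R := ℝ) (S₁ := ℝ) g R = MvPolynomial.eval g R := by
    intro g R; rw [MvPolynomial.aeval_def]; rfl
  have hPo : ∀ (y : ℝ) (q : Polynomial ℝ),
      Polynomial.aeval (R := ℝ) y q = Polynomial.eval y q := by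
    intro y q; rw [Polynomial.aeval_def]; rfl
  -- transfer of two-variable relations into K
  have hzeroK : ∀ (u v : S) (R : MvPolynomial (Fin 2) ℝ),
      (∀ t, MvPolynomial.eval ![ev t u, ev t v] R = 0) →
      MvPolynomial.aeval ![φ u, φ v] R = 0 := by
    intro u v R hR
    have h0 : MvPolynomial.aeval ![u, v] R = 0 := by
      apply hsep
      intro t
      have h1 := MvPolynomial.comp_aeval_apply (f := ![u, v]) (ev t) R
      rw [h1, hMv]
      have h2 : (fun i => ev t (![u, v] i)) = ![ev t u, ev t v] := by
        funext i; fin_cases i <;> rfl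
      rw [h2]
      exact hR t
    have hcomp := MvPolynomial.comp_aeval_apply (f := ![u, v])
      (IsScalarTower.toAlgHom ℝ S K) R
    rw [h0, map_zero] at hcomp
    have h3 : (fun i => (IsScalarTower.toAlgHom ℝ S K) (![u, v] i)) = ![φ u, φ v] := by
      funext i; fin_cases i <;> rfl
    rw [h3] at hcomp
    exact hcomp.symm
  -- β is transcendental in K
  have hβtK : Transcendental ℝ (φ β) := by
    rintro ⟨q, hq0, hqz⟩
    obtain ⟨t, hne⟩ := hβt q hq0
    apply hne
    have h0 : Polynomial.aeval β q = 0 := by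
      apply hφinj
      rw [map_zero]
      have hc := Polynomial.aeval_algHom_apply (IsScalarTower.toAlgHom ℝ S K) β q
      exact hc.symm.trans hqz
    have h1 := Polynomial.aeval_algHom_apply (ev t) β q
    rw [h0, map_zero] at h1
    rw [← hPo]
    exact h1
  -- dependence relations
  have hxβ : ¬ AlgebraicIndependent ℝ ![φ x, φ β] := by
    intro hi
    exact hQ0 ((algebraicIndependent_iff.mp hi) Q (hzeroK x β Q hQ))
  have hαβ : ¬ AlgebraicIndependent ℝ ![φ α, φ β] := by
    intro hi
    exact hP0 ((algebraicIndependent_iff.mp hi) P (hzeroK α β P hP))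
  have hdep : ¬ AlgebraicIndependent ℝ ![φ x, φ α] := key_dep _ _ _ hβtK hxβ hαβ
  rw [algebraicIndependent_iff] at hdep
  push_neg at hdep
  obtain ⟨R, hR1, hR2⟩ := hdep
  refine ⟨R, hR2, ?_⟩
  -- back to pointwise evaluation
  have h0 : MvPolynomial.aeval ![x, α] R = 0 := by
    apply hφinj
    rw [map_zero]
    have hcomp := MvPolynomial.comp_aeval_apply (f := ![x, α])
      (IsScalarTower.toAlgHom ℝ S K) R
    have h3 : (fun i => (IsScalarTower.toAlgHom ℝ S K) (![x, α] i)) = ![φ x, φ α] := by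
      funext i; fin_cases i <;> rfl
    rw [h3] at hcomp
    exact hcomp.trans hR1
  intro t
  have h1 := MvPolynomial.comp_aeval_apply (f := ![x, α]) (ev t) R
  rw [h0, map_zero] at h1
  have h2 : (fun i => ev t (![x, α] i)) = ![ev t x, ev t α] := by
    funext i; fin_cases i <;> rfl
  rw [h2, hMv] at h1
  exact h1.symm

/-- Contrapositive obstruction: if `h` is analytic, algebraic and nonconstant on an
interval, and `A` is analytic, maps into it, and is not algebraic, then `h ∘ A` is not
algebraic on any nonempty open subinterval. -/
theorem comp_not_algebraic_of_not_algebraic (a b c d : ℝ) (hab : a < b) (hcd : c < d)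
    (h A : ℝ → ℝ)
    (hh : AnalyticOn ℝ h (Set.Ioo a b))
    (hhalg : IsAlgebraicOn h (Set.Ioo a b))
    (hnc : ∃ t ∈ Set.Ioo a b, deriv h t ≠ 0)
    (hA : AnalyticOn ℝ A (Set.Ioo c d))
    (hmap : Set.MapsTo A (Set.Ioo c d) (Set.Ioo a b))
    (hAtrans : ¬ IsAlgebraicOn A (Set.Ioo c d)) :
    ∀ c' d' : ℝ, c' < d' → Set.Ioo c' d' ⊆ Set.Ioo c d →
      ¬ ∃ Q : MvPolynomial (Fin 2) ℝ, Q ≠ 0 ∧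
        ∀ p ∈ Set.Ioo c' d', MvPolynomial.eval ![p, h (A p)] Q = 0 := by
  intro c' d' hc'd' hsubI
  rintro ⟨Q, hQ0, hQv⟩
  classical
  obtain ⟨P, hP0, hPv⟩ := hhalg
  have hhN : AnalyticOnNhd ℝ h (Set.Ioo a b) := (isOpen_Ioo.analyticOn_iff_analyticOnNhd).mp hh
  have hAN : AnalyticOnNhd ℝ A (Set.Ioo c d) := (isOpen_Ioo.analyticOn_iff_analyticOnNhd).mp hA
  have hA_I : AnalyticOnNhd ℝ A (Set.Ioo c' d') := hAN.mono hsubI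
  have hmap' : Set.MapsTo A (Set.Ioo c' d') (Set.Ioo a b) := fun z hz => hmap (hsubI hz)
  have hhA : AnalyticOnNhd ℝ (fun p => h (A p)) (Set.Ioo c' d') := hhN.comp hA_I hmap'
  haveI : IsDomain (aSubalg c' d') := aSubalg_isDomain hc'd'
  obtain ⟨t₀, ht₀⟩ := Set.nonempty_Ioo.mpr hc'd'
  haveI : Nonempty (Set.Ioo c' d') := ⟨⟨t₀, ht₀⟩⟩
  -- the three elements of the function algebra
  let xS : aSubalg c' d' := ⟨fun z => z.1, id, analyticOnNhd_id, fun _ => rfl⟩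
  let αS : aSubalg c' d' := ⟨fun z => A z.1, A, hA_I, fun _ => rfl⟩
  let βS : aSubalg c' d' := ⟨fun z => h (A z.1), fun p => h (A p), hhA, fun _ => rfl⟩
  -- β is "pointwise transcendental": otherwise h ∘ A, hence A, is constant
  have hβt : ∀ q : Polynomial ℝ, q ≠ 0 →
      ∃ t : Set.Ioo c' d', Polynomial.eval (evalA c' d' t βS) q ≠ 0 := by
    intro q hq0
    by_contra hno
    push_neg at hno
    have hroot : ∀ t ∈ Set.Ioo c' d', q.eval (h (A t)) = 0 := fun t ht => hno ⟨t, ht⟩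
    -- h ∘ A is constant on the interval
    have hconst1 : ∀ s ∈ Set.Ioo c' d', ∀ u ∈ Set.Ioo c' d', h (A s) = h (A u) := by
      intro s hs u hu
      by_contra hne
      have hsubuIcc : Set.uIcc s u ⊆ Set.Ioo c' d' := Set.OrdConnected.uIcc_subset
        Set.ordConnected_Ioo hs hu
      have hcont : ContinuousOn (fun p => h (A p)) (Set.uIcc s u) :=
        (hhA.continuousOn).mono hsubuIcc
      have hiv := intermediate_value_uIcc hcont
      have hinf : (Set.uIcc (h (A s)) (h (A u))).Infinite := by
        rw [Set.uIcc]
        exact Set.Icc_infinite (min_lt_max.mpr hne)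
      have hfin : (Set.uIcc (h (A s)) (h (A u))).Finite := by
        apply Set.Finite.subset (Polynomial.finite_setOf_isRoot hq0)
        intro y hy
        obtain ⟨z, hz, hzy⟩ := hiv hy
        rw [← hzy]
        exact hroot z (hsubuIcc hz)
      exact hinf hfin
    -- hence A is constant on the interval (since h has isolated fibers)
    set v := h (A t₀) with hv
    have hconst2 : ∀ s ∈ Set.Ioo c' d', A s = A t₀ := by
      intro s hs
      by_contra hne
      have hsubuIcc : Set.uIcc s t₀ ⊆ Set.Ioo c' d' := Set.OrdConnected.uIcc_subset
        Set.ordConnected_Ioo hs ht₀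
      have hcont : ContinuousOn A (Set.uIcc s t₀) := (hA_I.continuousOn).mono hsubuIcc
      have hiv := intermediate_value_uIcc hcont
      -- h equals v on the nondegenerate interval uIcc (A s) (A t₀)
      have hhv : ∀ y ∈ Set.uIcc (A s) (A t₀), h y = v := by
        intro y hy
        obtain ⟨z, hz, hzy⟩ := hiv hy
        rw [← hzy]
        exact hconst1 z (hsubuIcc hz) t₀ ht₀
      set m₁ := min (A s) (A t₀) with hm₁
      set m₂ := max (A s) (A t₀) with hm₂
      have hm : m₁ < m₂ := min_lt_max.mpr hne
      set z₀ := (m₁ + m₂) / 2 with hz₀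
      have hz₀m : z₀ ∈ Set.Ioo m₁ m₂ := ⟨by linarith, by linarith⟩
      have hz₀I : z₀ ∈ Set.Ioo a b := by
        have : z₀ ∈ Set.uIcc (A s) (A t₀) := by
          rw [Set.uIcc]
          exact ⟨le_of_lt hz₀m.1, le_of_lt hz₀m.2⟩
        obtain ⟨z, hz, hzy⟩ := hiv this
        rw [← hzy]
        exact hmap' (hsubuIcc hz)
      have hev : (fun y => h y - v) =ᶠ[nhds z₀] 0 := by
        have : ∀ᶠ y in nhds z₀, y ∈ Set.Ioo m₁ m₂ := isOpen_Ioo.eventually_mem hz₀m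
        filter_upwards [this] with y hy
        have : y ∈ Set.uIcc (A s) (A t₀) := by
          rw [Set.uIcc]
          exact ⟨le_of_lt hy.1, le_of_lt hy.2⟩
        simp [hhv y this]
      have heq : Set.EqOn (fun y => h y - v) 0 (Set.Ioo a b) :=
        (hhN.sub analyticOnNhd_const).eqOn_zero_of_preconnected_of_eventuallyEq_zero
          isPreconnected_Ioo hz₀I hev
      obtain ⟨t₁, ht₁, hd₁⟩ := hnc
      apply hd₁
      have hev₁ : h =ᶠ[nhds t₁] fun _ => v := by
        have : ∀ᶠ y in nhds t₁, y ∈ Set.Ioo a b := isOpen_Ioo.eventually_mem ht₁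
        filter_upwards [this] with y hy
        have := heq hy
        simp only [Pi.zero_apply] at this
        linarith [this]
      rw [hev₁.deriv_eq]
      exact deriv_const _ _
    -- A is constant, contradicting that A is not algebraic
    apply hAtrans
    refine ⟨MvPolynomial.X 1 - MvPolynomial.C (A t₀), ?_, ?_⟩
    · intro hc
      have := congrArg (MvPolynomial.eval (fun i => if i = 1 then A t₀ + 1 else 0)) hc
      simp at this
    · intro p hp
      have hAp : Set.EqOn (fun p => A p - A t₀) 0 (Set.Ioo c d) := by
        apply (hAN.sub analyticOnNhd_const).eqOn_zero_of_preconnected_of_eventuallyEq_zero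
          isPreconnected_Ioo (hsubI ht₀)
        have : ∀ᶠ y in nhds t₀, y ∈ Set.Ioo c' d' := isOpen_Ioo.eventually_mem ht₀
        filter_upwards [this] with y hy
        simp [hconst2 y hy]
      have := hAp hp
      simp only [Pi.zero_apply] at this
      simp [Matrix.cons_val_one, Matrix.head_cons]
      linarith [this]
  -- apply the abstract dependence lemma
  obtain ⟨R, hR0, hRpt⟩ := germ_dep (evalA c' d')
    (by
      intro s hs
      apply Subtype.ext; funext t
      exact hs t)
    xS αS βS hβt Q hQ0
    (by
      intro t
      exact hQv t t.2)
    P hP0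
    (by
      intro t
      exact hPv (A t) (hmap' t.2))
  -- extend by analytic continuation to the whole interval
  apply hAtrans
  refine ⟨R, hR0, ?_⟩
  intro p hp
  have hgan : AnalyticOnNhd ℝ (fun p => MvPolynomial.eval ![p, A p] R) (Set.Ioo c d) :=
    analytic_eval hAN R
  have heq : Set.EqOn (fun p => MvPolynomial.eval ![p, A p] R) 0 (Set.Ioo c d) := by
    apply hgan.eqOn_zero_of_preconnected_of_eventuallyEq_zero isPreconnected_Ioo (hsubI ht₀)
    have : ∀ᶠ y in nhds t₀, y ∈ Set.Ioo c' d' := isOpen_Ioo.eventually_mem ht₀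
    filter_upwards [this] with y hy
    exact hRpt ⟨y, hy⟩
  exact heq hp
end
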